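/- For every interval of natural numbers I = [q, s] with 1 ≤ q ≤ s, there exist two finite sequences of pairwise disjoint, consecutive dyadic intervals (I_{−k}, …, I_0) ⊆ ℐ and (I_1, I_2, …, I_p) ⊆ ℐ, all contained in I, whose union (in order I_{−k}, …, I_0, I_1, …, I_p) is exactly I, and such that |I_{−i}|/|I_{−i+1}| ≤ 1/2 for all i ≥ 1 and |I_i|/|I_{i−1}| ≤ 1/2 for all i ≥ 2. -/
import Mathlib

/-- The dyadic interval `I_{j,k} = {k·2^j, …, (k+1)·2^j − 1}`. -/
def dIval (j k : ℕ) : Finset ℕ := Finset.Ico (k * 2 ^ j) ((k + 1) * 2 ^ j)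

namespace DyadicAux

/-- The exponent of the greedy dyadic interval starting at `a` inside `[·, b)`. -/
def jf (b a : ℕ) : ℕ := min (padicValNat 2 a) (Nat.log 2 (b - a))

/-- The sequence of left endpoints. -/
def dseq (q b : ℕ) : ℕ → ℕ
  | 0 => q
  | i + 1 => if dseq q b i < b then dseq q b i + 2 ^ jf b (dseq q b i) else dseq q b i

lemma pow_jf_le {a b : ℕ} (h : a < b) : 2 ^ jf b a ≤ b - a :=
  le_trans (Nat.pow_le_pow_right (by norm_num) (min_le_right _ _))
    (Nat.pow_log_le_self 2 (by omega))

lemma pow_jf_dvd (b a : ℕ) : 2 ^ jf b a ∣ a :=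
  dvd_trans (pow_dvd_pow 2 (min_le_left _ _)) pow_padicValNat_dvd

lemma dseq_succ_of_lt {q b i : ℕ} (h : dseq q b i < b) :
    dseq q b (i + 1) = dseq q b i + 2 ^ jf b (dseq q b i) := by
  simp [dseq, h]

lemma dseq_le_succ (q b i : ℕ) : dseq q b i ≤ dseq q b (i + 1) := by
  by_cases h : dseq q b i < b
  · rw [dseq_succ_of_lt h]; exact Nat.le_add_right _ _
  · simp [dseq, h]

lemma dseq_mono (q b : ℕ) : Monotone (dseq q b) :=
  monotone_nat_of_le_succ (dseq_le_succ q b)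

lemma dseq_le_b {q b : ℕ} (hqb : q ≤ b) : ∀ i, dseq q b i ≤ b := by
  intro i
  induction i with
  | zero => exact hqb
  | succ i ih =>
    by_cases h : dseq q b i < b
    · rw [dseq_succ_of_lt h]
      have := pow_jf_le h
      omega
    · simp [dseq, h]; omega

lemma q_le_dseq (q b i : ℕ) : q ≤ dseq q b i := dseq_mono q b (Nat.zero_le i)

lemma dseq_reaches {q b : ℕ} (hqb : q ≤ b) : dseq q b (b - q) = b := by
  have key : ∀ i, min b (q + i) ≤ dseq q b i := by
    intro i
    induction i with
    | zero => simp [dseq]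
    | succ i ih =>
      by_cases h : dseq q b i < b
      · rw [dseq_succ_of_lt h]
        have : 1 ≤ 2 ^ jf b (dseq q b i) := Nat.one_le_two_pow
        omega
      · have : dseq q b (i + 1) = dseq q b i := by simp [dseq, h]
        omega
  have h1 := key (b - q)
  have h2 := dseq_le_b hqb (b - q)
  omega

end DyadicAux

open DyadicAux in
/-- Every interval of natural numbers `[q, s]` with `1 ≤ q ≤ s` can be
partitioned into two finite sequences of pairwise disjoint, consecutive dyadic
intervals `(I_{−k}, …, I_0)` (list positions `0, …, kpos`) and
`(I_1, …, I_p)` (list positions `kpos + 1, …, m − 1`), whose union in order is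
exactly `[q, s]`, with `|I_{−i}|/|I_{−i+1}| ≤ 1/2` for all `i ≥ 1` and
`|I_i|/|I_{i−1}| ≤ 1/2` for all `i ≥ 2`. -/
theorem dyadic_partition (q s : ℕ) (hq : 1 ≤ q) (hqs : q ≤ s) :
    ∃ (m kpos : ℕ) (J : ℕ → ℕ × ℕ), kpos < m ∧
      -- each piece is a genuine dyadic interval (k ≥ 1)
      (∀ i < m, 1 ≤ (J i).2) ∧
      -- the intervals are consecutive: each starts right after the previous ends
      (∀ i, i + 1 < m → (J (i + 1)).2 * 2 ^ (J (i + 1)).1 = ((J i).2 + 1) * 2 ^ (J i).1) ∧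
      -- the first starts at q and the last ends at s
      (J 0).2 * 2 ^ (J 0).1 = q ∧
      ((J (m - 1)).2 + 1) * 2 ^ (J (m - 1)).1 = s + 1 ∧
      -- all pieces lie inside [q, s] and their union is exactly [q, s]
      (∀ i < m, dIval (J i).1 (J i).2 ⊆ Finset.Icc q s) ∧
      Finset.Icc q s = (Finset.range m).biUnion (fun i => dIval (J i).1 (J i).2) ∧
      -- the pieces are pairwise disjoint
      (∀ i j, i < j → j < m → Disjoint (dIval (J i).1 (J i).2) (dIval (J j).1 (J j).2)) ∧
      -- lengths at most double going forward up to position kpos (|I_{−i}| ≤ |I_{−i+1}|/2)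
      (∀ i, i + 1 ≤ kpos → 2 * 2 ^ (J i).1 ≤ 2 ^ (J (i + 1)).1) ∧
      -- lengths at least halve going forward after position kpos (|I_i| ≤ |I_{i−1}|/2 for i ≥ 2)
      (∀ i, kpos + 1 ≤ i → i + 1 < m → 2 * 2 ^ (J (i + 1)).1 ≤ 2 ^ (J i).1) := by
  set b := s + 1 with hb
  have hqb : q < b := by omega
  set f : ℕ → ℕ := dseq q b with hf
  have hf0 : f 0 = q := rfl
  have hreach : ∃ i, f i = b := ⟨b - q, dseq_reaches (by omega)⟩
  set m := Nat.find hreach with hm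
  have hfm : f m = b := Nat.find_spec hreach
  have hlt : ∀ i < m, f i < b := by
    intro i hi
    have h1 : f i ≤ b := dseq_le_b (by omega) i
    have h2 : f i ≠ b := Nat.find_min hreach hi
    omega
  have hm1 : 1 ≤ m := by
    rcases Nat.eq_zero_or_pos m with h | h
    · exfalso; rw [h] at hfm; rw [hf0] at hfm; omega
    · exact h
  have hfq : ∀ i, q ≤ f i := q_le_dseq q b
  have hf1 : ∀ i, 1 ≤ f i := fun i => le_trans hq (hfq i)
  have hstep : ∀ i < m, f (i + 1) = f i + 2 ^ jf b (f i) :=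
    fun i hi => dseq_succ_of_lt (hlt i hi)
  have hdvd : ∀ i, 2 ^ jf b (f i) ∣ f i := fun i => pow_jf_dvd b (f i)
  -- the pieces
  set J : ℕ → ℕ × ℕ := fun i => (jf b (f i), f i / 2 ^ jf b (f i)) with hJ
  have hJval : ∀ i, (J i).2 * 2 ^ (J i).1 = f i := by
    intro i; exact Nat.div_mul_cancel (hdvd i)
  have hJval' : ∀ i < m, ((J i).2 + 1) * 2 ^ (J i).1 = f (i + 1) := by
    intro i hi
    rw [add_mul, one_mul, hJval i, hstep i hi]
  have hIval : ∀ i < m, dIval (J i).1 (J i).2 = Finset.Ico (f i) (f (i + 1)) := by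
    intro i hi
    rw [dIval, hJval i, hJval' i hi]
  -- rising / falling
  have hrfex : ∃ i, i = m ∨ Nat.log 2 (b - f i) < padicValNat 2 (f i) := ⟨m, Or.inl rfl⟩
  set r := Nat.find hrfex with hr
  have hrm : r ≤ m := Nat.find_le (Or.inl rfl)
  -- falling propagates
  have hfallstep : ∀ i, i + 1 < m → Nat.log 2 (b - f i) < padicValNat 2 (f i) →
      Nat.log 2 (b - f (i + 1)) < padicValNat 2 (f (i + 1)) ∧
      2 * 2 ^ jf b (f (i + 1)) ≤ 2 ^ jf b (f i) := by
    intro i hi1 hfall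
    have hi : i < m := by omega
    have hilt := hlt i hi
    have hi1lt := hlt (i + 1) hi1
    set L := Nat.log 2 (b - f i) with hL
    have hjfi : jf b (f i) = L := by
      rw [jf]; omega
    have hub : b - f i < 2 ^ (L + 1) := Nat.lt_pow_succ_log_self (by norm_num) _
    have hLdvd : 2 ^ L ∣ f i :=
      dvd_trans (pow_dvd_pow 2 (le_of_lt hfall)) pow_padicValNat_dvd
    have hstepi : f (i + 1) = f i + 2 ^ L := by rw [hstep i hi, hjfi]
    have hrem : b - f (i + 1) < 2 ^ L := by
      have : (2:ℕ) ^ (L + 1) = 2 * 2 ^ L := by ring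
      omega
    have hrempos : 1 ≤ b - f (i + 1) := by omega
    set L' := Nat.log 2 (b - f (i + 1)) with hL'
    have hL'le : 2 ^ L' ≤ b - f (i + 1) := Nat.pow_log_le_self 2 (by omega)
    have hL'lt : L' < L := by
      by_contra h
      have : (2:ℕ) ^ L ≤ 2 ^ L' := Nat.pow_le_pow_right (by norm_num) (by omega)
      omega
    have hdvd' : 2 ^ L ∣ f (i + 1) := by
      rw [hstepi]; exact Dvd.dvd.add hLdvd dvd_rfl
    have hval' : L ≤ padicValNat 2 (f (i + 1)) := by
      rw [← padicValNat_dvd_iff_le (by have := hf1 (i+1); omega)]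
      exact hdvd'
    refine ⟨by omega, ?_⟩
    have hjfi1 : jf b (f (i + 1)) = L' := by rw [jf]; omega
    rw [hjfi, hjfi1]
    have : (2:ℕ) * 2 ^ L' = 2 ^ (L' + 1) := by ring
    rw [this]
    exact Nat.pow_le_pow_right (by norm_num) (by omega)
  have hfalling : ∀ i, r ≤ i → i < m → Nat.log 2 (b - f i) < padicValNat 2 (f i) := by
    intro i hri him
    induction i with
    | zero =>
      have : r = 0 := by omega
      have h0 := Nat.find_spec hrfex
      rw [← hr] at h0
      rcases (this ▸ h0) with h | h
      · omega
      · exact h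
    | succ i ih =>
      rcases Nat.lt_or_ge r (i + 1) with h | h
      · have hii : i < m := by omega
        have hfi := ih (by omega) hii
        exact (hfallstep i him hfi).1
      · have : r = i + 1 := by omega
        have h0 := Nat.find_spec hrfex
        rw [← hr, this] at h0
        rcases h0 with h' | h'
        · omega
        · exact h'
  refine ⟨m, r - 1, J, by omega, ?_, ?_, ?_, ?_, ?_, ?_, ?_, ?_, ?_⟩
  · -- k ≥ 1
    intro i _
    by_contra h
    have h0 : (J i).2 = 0 := by omega
    have h1 := hJval i
    rw [h0, zero_mul] at h1
    have := hf1 i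
    omega
  · -- consecutive
    intro i hi
    rw [hJval (i + 1), hJval' i (by omega)]
  · -- first
    rw [hJval 0, hf0]
  · -- last
    rw [hJval' (m - 1) (by omega)]
    have : m - 1 + 1 = m := by omega
    rw [this, hfm]
  · -- subset
    intro i hi
    rw [hIval i hi]
    intro x hx
    simp only [Finset.mem_Ico] at hx
    have h1 := hfq i
    have h2 : f (i + 1) ≤ b := dseq_le_b (by omega) (i + 1)
    simp only [Finset.mem_Icc]
    omega
  · -- union
    have key : ∀ n, (Finset.range n).biUnion (fun i => Finset.Ico (f i) (f (i + 1)))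
        = Finset.Ico (f 0) (f n) := by
      intro n
      induction n with
      | zero => simp
      | succ n ih =>
        rw [Finset.range_add_one, Finset.biUnion_insert, ih, Finset.union_comm,
          Finset.Ico_union_Ico_eq_Ico (dseq_mono q b (Nat.zero_le n)) (dseq_le_succ q b n)]
    have : Finset.Icc q s = Finset.Ico (f 0) (f m) := by
      rw [hf0, hfm, hb, Finset.Ico_add_one_right_eq_Icc]
    rw [this, ← key]
    apply Finset.biUnion_congr rfl
    intro i hi
    rw [hIval i (Finset.mem_range.mp hi)]
  · -- disjoint
    intro i j hij hjm
    rw [hIval i (by omega), hIval j hjm]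
    rw [Finset.disjoint_left]
    intro x hx hx'
    simp only [Finset.mem_Ico] at hx hx'
    have : f (i + 1) ≤ f j := dseq_mono q b (by omega)
    omega
  · -- rising
    intro i hik
    have hi1r : i + 1 < r := by omega
    have hir : i < r := by omega
    have hi1m : i + 1 < m := by omega
    have him : i < m := by omega
    have hnf : ¬ (i = m ∨ Nat.log 2 (b - f i) < padicValNat 2 (f i)) :=
      Nat.find_min hrfex hir
    have hnf1 : ¬ (i + 1 = m ∨ Nat.log 2 (b - f (i + 1)) < padicValNat 2 (f (i + 1))) :=
      Nat.find_min hrfex hi1r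
    push_neg at hnf hnf1
    set v := padicValNat 2 (f i) with hv
    have hjfi : jf b (f i) = v := by rw [jf]; omega
    have hstepi : f (i + 1) = f i + 2 ^ v := by rw [hstep i him, hjfi]
    -- 2^(v+1) ∣ f (i+1)
    obtain ⟨c, hc⟩ := pow_padicValNat_dvd (p := 2) (n := f i)
    have hodd : ¬ 2 ∣ c := by
      intro ⟨d, hd⟩
      have : 2 ^ (v + 1) ∣ f i := ⟨d, by rw [hc, hd]; ring⟩
      exact pow_succ_padicValNat_not_dvd (by have := hf1 i; omega) this
    have hceven : 2 ∣ c + 1 := by omega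
    obtain ⟨e, he⟩ := hceven
    have hdvd1 : 2 ^ (v + 1) ∣ f (i + 1) := by
      refine ⟨e, ?_⟩
      rw [hstepi, hc]
      calc 2 ^ v * c + 2 ^ v = 2 ^ v * (c + 1) := by ring
        _ = 2 ^ v * (2 * e) := by rw [he]
        _ = 2 ^ (v + 1) * e := by ring
    have hval1 : v + 1 ≤ padicValNat 2 (f (i + 1)) := by
      rw [← padicValNat_dvd_iff_le (by have := hf1 (i + 1); omega)]
      exact hdvd1
    have hjfi1 : jf b (f (i + 1)) = padicValNat 2 (f (i + 1)) := by
      rw [jf]; omega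
    show 2 * 2 ^ jf b (f i) ≤ 2 ^ jf b (f (i + 1))
    rw [hjfi, hjfi1]
    calc 2 * 2 ^ v = 2 ^ (v + 1) := by ring
      _ ≤ 2 ^ padicValNat 2 (f (i + 1)) := Nat.pow_le_pow_right (by norm_num) hval1
  · -- falling
    intro i hik hi1m
    have hir : r ≤ i := by omega
    have hfi := hfalling i hir (by omega)
    exact (hfallstep i hi1m hfi).2
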